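/- For every n ≥ 1: 𝒱ₙ ⊆ 𝒜ₙ and ℰₙ ⊆ ℬₙ, i.e., every pointed frame in 𝒱ₙ belongs to the class 𝒜ₙ and every pointed frame in ℰₙ belongs to its complement ℬₙ. -/

import Mathlib

universe u v

/-- A Kripke model for a set `Φ` of proposition symbols: a set of worlds `W`,
an accessibility relation `R` and a valuation `V`. -/
structure KripkeModel (Φ : Type) : Type (u + 1) where
  W : Type u
  R : W → W → Prop
  V : Φ → W → Prop

/-- A pointed Kripke model: a Kripke model together with a distinguished world. -/
structure PointedModel (Φ : Type) : Type (u + 1) where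
  M : KripkeModel.{u} Φ
  w : M.W

/-- `n`-bisimilarity of pointed models: there are relations `Zₙ ⊆ … ⊆ Z₀` such that the
distinguished pair is in `Zₙ`, `Z₀` relates only propositionally equivalent points, and the
back-and-forth conditions hold for each `0 ≤ i ≤ n-1`. -/
def NBisim {Φ : Type} (n : ℕ) (M : KripkeModel.{u} Φ) (w : M.W)
    (N : KripkeModel.{v} Φ) (x : N.W) : Prop :=
  ∃ Z : ℕ → M.W → N.W → Prop,
    (∀ i, i < n → ∀ a b, Z (i + 1) a b → Z i a b) ∧
    Z n w x ∧
    (∀ a b, Z 0 a b → ∀ p, M.V p a ↔ N.V p b) ∧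
    (∀ i, i < n → ∀ a b, Z (i + 1) a b → ∀ c, M.R a c → ∃ d, N.R b d ∧ Z i c d) ∧
    (∀ i, i < n → ∀ a b, Z (i + 1) a b → ∀ d, N.R b d → ∃ c, M.R a c ∧ Z i c d)

/-- The class `𝒜ₙ` of all pointed frames `(A, w)` such that any two `R`-successors of `w`
are `n`-bisimilar.  Its complement is the class `ℬₙ`. -/
def classA (n : ℕ) : Set (PointedModel.{u} Empty) :=
  {P | ∀ a b : P.M.W, P.M.R P.w a → P.M.R P.w b → NBisim n P.M a P.M b}

/-- The finite levels of the cumulative hierarchy: `V₀ = ∅`, `V_{k+1} = 𝒫(V_k)`. -/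
def Vlev : ℕ → ZFSet
  | 0 => ∅
  | n + 1 => ZFSet.powerset (Vlev n)

/-- The converse-membership accessibility relation on sets: `a R b` iff `b ∈ a`. -/
def zmem (a b : ZFSet) : Prop := b ∈ a

/-- `M_a`: the subframe of the frame `(V, ∋)` generated by the point `a`; its domain
consists of all points reachable from `a` by iterated membership. -/
def Ma (a : ZFSet) : KripkeModel.{1} Empty where
  W := {x : ZFSet // Relation.ReflTransGen zmem a x}
  R := fun x y => zmem x.1 y.1
  V := fun p _ => p.elim

/-- The pointed frame `(M_a, a)`. -/
def Mpt (a : ZFSet) : PointedModel.{1} Empty :=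
  ⟨Ma a, ⟨a, Relation.ReflTransGen.refl⟩⟩

/-- `⋁A`: the pointed frame obtained from a set `A` of pointed frames by adding a new
point (the new distinguished point) with `R`-edges to the distinguished point of each
member of `A`, keeping all original edges. -/
def vee (A : Set (PointedModel.{u} Empty)) : PointedModel.{u + 1} Empty where
  M :=
    { W := Option ((Q : {P : PointedModel.{u} Empty // P ∈ A}) × Q.1.M.W)
      R := fun x y =>
        (∃ Q : {P : PointedModel.{u} Empty // P ∈ A}, x = none ∧ y = some ⟨Q, Q.1.w⟩) ∨
        (∃ (Q : {P : PointedModel.{u} Empty // P ∈ A}) (a b : Q.1.M.W),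
          Q.1.M.R a b ∧ x = some ⟨Q, a⟩ ∧ y = some ⟨Q, b⟩)
      V := fun p _ => p.elim }
  w := none

/-- `𝒱ₙ = { ⋁{(M_a, a)} : a ∈ V_{n+1} }`. -/
def calV (n : ℕ) : Set (PointedModel.{2} Empty) :=
  {P | ∃ a, a ∈ Vlev (n + 1) ∧ P = vee {Mpt a}}

/-- `ℰₙ = { ⋁{(M_a, a), (M_b, b)} : a, b ∈ V_{n+1}, a ≠ b }`. -/
def calE (n : ℕ) : Set (PointedModel.{2} Empty) :=
  {P | ∃ a b, a ∈ Vlev (n + 1) ∧ b ∈ Vlev (n + 1) ∧ a ≠ b ∧ P = vee {Mpt a, Mpt b}}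

lemma key (n : ℕ) (a b : ZFSet)
    (Z : ℕ → (vee {Mpt a, Mpt b}).M.W → (vee {Mpt a, Mpt b}).M.W → Prop)
    (hf : ∀ i, i < n → ∀ p q, Z (i + 1) p q → ∀ r, (vee {Mpt a, Mpt b}).M.R p r →
      ∃ s, (vee {Mpt a, Mpt b}).M.R q s ∧ Z i r s)
    (hbk : ∀ i, i < n → ∀ p q, Z (i + 1) p q → ∀ s, (vee {Mpt a, Mpt b}).M.R q s →
      ∃ r, (vee {Mpt a, Mpt b}).M.R p r ∧ Z i r s) :
    ∀ i, i ≤ n → ∀ (u : (Ma a).W) (v : (Ma b).W),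
      u.1 ∈ Vlev (i + 1) → v.1 ∈ Vlev (i + 1) →
      Z i (some ⟨⟨Mpt a, Or.inl rfl⟩, u⟩) (some ⟨⟨Mpt b, Or.inr rfl⟩, v⟩) →
      u.1 = v.1 := by
  intro i
  induction i with
  | zero =>
    intro _ u v hu hv _
    have hu' : u.1 ⊆ (∅ : ZFSet) := ZFSet.mem_powerset.mp hu
    have hv' : v.1 ⊆ (∅ : ZFSet) := ZFSet.mem_powerset.mp hv
    apply ZFSet.ext
    intro c
    constructor
    · intro hc; exact absurd (hu' hc) (ZFSet.notMem_empty c)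
    · intro hc; exact absurd (hv' hc) (ZFSet.notMem_empty c)
  | succ i ih =>
    intro hle u v hu hv hZ
    have hin : i < n := hle
    have hile : i ≤ n := Nat.le_of_succ_le hle
    have hu' : u.1 ⊆ Vlev (i + 1) := ZFSet.mem_powerset.mp hu
    have hv' : v.1 ⊆ Vlev (i + 1) := ZFSet.mem_powerset.mp hv
    apply ZFSet.ext
    intro c
    constructor
    · intro hc
      have hR : (vee {Mpt a, Mpt b}).M.R (some ⟨⟨Mpt a, Or.inl rfl⟩, u⟩)
          (some ⟨⟨Mpt a, Or.inl rfl⟩, ⟨c, u.2.tail hc⟩⟩) :=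
        Or.inr ⟨⟨Mpt a, Or.inl rfl⟩, u, ⟨c, u.2.tail hc⟩, hc, rfl, rfl⟩
      obtain ⟨s, hsR, hZs⟩ := hf i hin _ _ hZ _ hR
      rcases hsR with ⟨Q, h1, h2⟩ | ⟨Q, x, y, hxy, h1, h2⟩
      · exact absurd h1 (by simp)
      · injection h1 with h1
        injection h1 with hQ hx
        subst hQ
        have hx' : v = x := eq_of_heq hx
        subst hx'
        subst h2
        have := ih hile ⟨c, u.2.tail hc⟩ y (hu' hc) (hv' hxy) hZs
        exact (show c = y.1 from this) ▸ hxy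
    · intro hc
      have hR : (vee {Mpt a, Mpt b}).M.R (some ⟨⟨Mpt b, Or.inr rfl⟩, v⟩)
          (some ⟨⟨Mpt b, Or.inr rfl⟩, ⟨c, v.2.tail hc⟩⟩) :=
        Or.inr ⟨⟨Mpt b, Or.inr rfl⟩, v, ⟨c, v.2.tail hc⟩, hc, rfl, rfl⟩
      obtain ⟨r, hrR, hZr⟩ := hbk i hin _ _ hZ _ hR
      rcases hrR with ⟨Q, h1, h2⟩ | ⟨Q, x, y, hxy, h1, h2⟩
      · exact absurd h1 (by simp)
      · injection h1 with h1
        injection h1 with hQ hx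
        subst hQ
        have hx' : u = x := eq_of_heq hx
        subst hx'
        subst h2
        have := ih hile y ⟨c, v.2.tail hc⟩ (hu' hxy) (hv' hc) hZr
        exact (show y.1 = c from this) ▸ hxy

/-- `𝒱ₙ ⊆ 𝒜ₙ` and `ℰₙ ⊆ ℬₙ`. -/
theorem calV_subset_classA_and_calE_subset_compl (n : ℕ) (hn : 1 ≤ n) :
    calV n ⊆ classA.{2} n ∧ calE n ⊆ (classA.{2} n)ᶜ := by
  constructor
  · rintro P ⟨a, ha, rfl⟩
    intro x y hx hy
    have hxy : x = y := by
      rcases hx with ⟨Q, _, rfl⟩ | ⟨Q, p, q, _, h, _⟩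
      · rcases hy with ⟨Q', _, rfl⟩ | ⟨Q', p, q, _, h, _⟩
        · have hQ : Q = Q' := Subtype.ext (Q.2.trans Q'.2.symm)
          subst hQ; rfl
        · exact absurd h (by simp [vee])
      · exact absurd h (by simp [vee])
    subst hxy
    refine ⟨fun _ p q => p = q, fun _ _ _ _ h => h, rfl, fun _ _ _ p => p.elim,
      ?_, ?_⟩
    · rintro i _ p q rfl c hc; exact ⟨c, hc, rfl⟩
    · rintro i _ p q rfl d hd; exact ⟨d, hd, rfl⟩
  · rintro P ⟨a, b, ha, hb, hne, rfl⟩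
    intro hP
    have hRa : (vee {Mpt a, Mpt b}).M.R (vee {Mpt a, Mpt b}).w
        (some ⟨⟨Mpt a, Or.inl rfl⟩, (Mpt a).w⟩) :=
      Or.inl ⟨⟨Mpt a, Or.inl rfl⟩, rfl, rfl⟩
    have hRb : (vee {Mpt a, Mpt b}).M.R (vee {Mpt a, Mpt b}).w
        (some ⟨⟨Mpt b, Or.inr rfl⟩, (Mpt b).w⟩) :=
      Or.inl ⟨⟨Mpt b, Or.inr rfl⟩, rfl, rfl⟩
    obtain ⟨Z, _, hZn, _, hf, hbk⟩ := hP _ _ hRa hRb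
    exact hne (key n a b Z hf hbk n le_rfl ⟨a, Relation.ReflTransGen.refl⟩
      ⟨b, Relation.ReflTransGen.refl⟩ ha hb hZn)
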